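/- Let e and x be elements of a (possibly non-unital) ring R with e² = e. Then for every natural number n there exist elements r₀, r₁, …, r_n ∈ R such that [e,x]_n = Σ_{i=0}^{n} r_i · e · [e,x]_i. -/

import Mathlib

/-- The iterated commutator `[e,x]_n`: `[e,x]_0 = e`, `[e,x]_{n+1} = [e,x]_n * x - x * [e,x]_n`. -/
def iterComm {R : Type*} [NonUnitalRing R] (e x : R) : ℕ → R
  | 0 => e
  | n + 1 => iterComm e x n * x - x * iterComm e x n

section Aux

variable {R : Type*} [NonUnitalRing R] (e x : R)

/-- `y` is an `R`-combination of `e * [e,x]_j` for `j ≤ n`. -/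
def InSpan (n : ℕ) (y : R) : Prop :=
  ∃ r : ℕ → R, y = ∑ j ∈ Finset.range (n + 1), r j * e * iterComm e x j

variable {e x}

theorem InSpan.zero (n : ℕ) : InSpan e x n 0 :=
  ⟨0, by simp⟩

theorem InSpan.add {n : ℕ} {y z : R} (hy : InSpan e x n y) (hz : InSpan e x n z) :
    InSpan e x n (y + z) := by
  obtain ⟨r, hr⟩ := hy
  obtain ⟨s, hs⟩ := hz
  exact ⟨r + s, by simp [hr, hs, add_mul, Finset.sum_add_distrib]⟩

theorem InSpan.sub {n : ℕ} {y z : R} (hy : InSpan e x n y) (hz : InSpan e x n z) :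
    InSpan e x n (y - z) := by
  obtain ⟨r, hr⟩ := hy
  obtain ⟨s, hs⟩ := hz
  exact ⟨r - s, by simp [hr, hs, sub_mul, Finset.sum_sub_distrib]⟩

theorem InSpan.lmul {n : ℕ} {y : R} (a : R) (hy : InSpan e x n y) :
    InSpan e x n (a * y) := by
  obtain ⟨r, hr⟩ := hy
  refine ⟨fun j => a * r j, ?_⟩
  rw [hr, Finset.mul_sum]
  exact Finset.sum_congr rfl fun j _ => by noncomm_ring

theorem InSpan.mono {n m : ℕ} (hnm : n ≤ m) {y : R} (hy : InSpan e x n y) :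
    InSpan e x m y := by
  obtain ⟨r, hr⟩ := hy
  refine ⟨fun j => if j < n + 1 then r j else 0, ?_⟩
  have h1 : ∑ j ∈ Finset.range (n + 1), r j * e * iterComm e x j
      = ∑ j ∈ Finset.range (n + 1), (if j < n + 1 then r j else 0) * e * iterComm e x j :=
    Finset.sum_congr rfl fun j hj => by rw [if_pos (Finset.mem_range.mp hj)]
  have h2 : ∑ j ∈ Finset.range (n + 1), (if j < n + 1 then r j else 0) * e * iterComm e x j
      = ∑ j ∈ Finset.range (m + 1), (if j < n + 1 then r j else 0) * e * iterComm e x j :=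
    Finset.sum_subset (Finset.range_subset_range.mpr (by omega)) fun j _ hj => by
      rw [if_neg (by simpa using hj)]; simp
  rw [hr, h1, h2]

theorem InSpan.single {n : ℕ} (a : R) {j : ℕ} (hj : j ≤ n) :
    InSpan e x n (a * e * iterComm e x j) := by
  refine ⟨fun k => if k = j then a else 0, ?_⟩
  rw [Finset.sum_eq_single_of_mem j (Finset.mem_range.mpr (by omega))
    (fun k _ hk => by simp [hk])]
  simp

theorem InSpan.finsetSum {n : ℕ} {ι : Type*} {s : Finset ι} {f : ι → R}
    (h : ∀ j ∈ s, InSpan e x n (f j)) : InSpan e x n (∑ j ∈ s, f j) := by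
  classical
  induction s using Finset.induction_on with
  | empty => simpa using InSpan.zero n
  | insert _ _ hj ih =>
    rw [Finset.sum_insert hj]
    exact (h _ (Finset.mem_insert_self _ _)).add
      (ih fun j hjs => h j (Finset.mem_insert_of_mem hjs))

/-- `[e,x]_j * x = [e,x]_{j+1} + x * [e,x]_j`. -/
theorem iterComm_mul_x (j : ℕ) :
    iterComm e x j * x = iterComm e x (j + 1) + x * iterComm e x j := by
  rw [show iterComm e x (j + 1) = iterComm e x j * x - x * iterComm e x j from rfl]
  noncomm_ring

/-- Multiplying a span element on the right by `x` lands in the next span, granted the key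
hypothesis about `e * x * [e,x]_j`. -/
theorem InSpan.mul_x {n : ℕ} {y : R}
    (hkey : ∀ j, j ≤ n → InSpan e x j (e * x * iterComm e x j))
    (hy : InSpan e x n y) : InSpan e x (n + 1) (y * x) := by
  obtain ⟨r, hr⟩ := hy
  rw [hr, Finset.sum_mul]
  refine InSpan.finsetSum fun j hj => ?_
  have hjn : j ≤ n := by simpa [Nat.lt_succ_iff] using Finset.mem_range.mp hj
  have hterm : r j * e * iterComm e x j * x
      = r j * e * iterComm e x (j + 1) + r j * (e * x * iterComm e x j) := by
    rw [mul_assoc (r j * e), iterComm_mul_x]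
    noncomm_ring
  rw [hterm]
  exact (InSpan.single (r j) (by omega)).add
    (((hkey j hjn).lmul (r j)).mono (by omega))

variable (he : e * e = e)
include he

/-- Key lemma: `e * y * [e,x]_j` lies in the span of `{r * e * [e,x]_k : k ≤ j}`. -/
theorem key_lemma : ∀ i : ℕ, ∀ j ≤ i, ∀ y : R, InSpan e x j (e * y * iterComm e x j) := by
  intro i
  induction i with
  | zero =>
    intro j hj y
    obtain rfl : j = 0 := Nat.le_zero.mp hj
    refine ⟨fun _ => e * y, ?_⟩
    show e * y * iterComm e x 0 = _
    simp [iterComm, mul_assoc, he]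
  | succ i ih =>
    intro j hj y
    rcases Nat.lt_succ_iff_lt_or_eq.mp (Nat.lt_succ_of_le hj) with h | rfl
    · exact ih j (Nat.lt_succ_iff.mp h) y
    · have h1 : e * y * iterComm e x (i + 1)
          = (e * y * iterComm e x i) * x - e * (y * x) * iterComm e x i := by
        rw [show iterComm e x (i + 1) = iterComm e x i * x - x * iterComm e x i from rfl]
        noncomm_ring
      rw [h1]
      exact ((ih i le_rfl y).mul_x fun k hk => ih k hk x).sub
        ((ih i le_rfl (y * x)).mono (by omega))

theorem inSpan_iterComm (n : ℕ) : InSpan e x n (iterComm e x n) := by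
  induction n with
  | zero =>
    refine ⟨fun _ => e, ?_⟩
    show iterComm e x 0 = _
    simp [iterComm, he]
  | succ n ihn =>
    rw [show iterComm e x (n + 1) = iterComm e x n * x - x * iterComm e x n from rfl]
    exact (ihn.mul_x fun k _ => key_lemma he n k (by omega) x).sub
      ((ihn.lmul x).mono (by omega))

end Aux

/-- Let `e` and `x` be elements of a (possibly non-unital) ring with `e * e = e`.
Then for every `n` there are `r₀, …, rₙ ∈ R` with `[e,x]_n = Σ_{i=0}^n rᵢ * e * [e,x]_i`. -/
theorem iterComm_eq_sum_mul_idem_mul_iterComm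
    {R : Type*} [NonUnitalRing R] (e x : R) (he : e * e = e) (n : ℕ) :
    ∃ r : ℕ → R,
      iterComm e x n = ∑ i ∈ Finset.range (n + 1), r i * e * iterComm e x i := by
  exact inSpan_iterComm he n
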